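/- For an SCH, an element x ∈ H^k lying in the subspace H^{k-1} is a k-cocycle if and only if it is a k-coboundary; i.e., H_c^k ∩ H^{k-1} = H_b^k ∩ H^{k-1}. -/
import Mathlib


/-- The coboundary operator `∂^k = Σ_{i=0}^{k+1} (-1)^{k+1-i} α_i` (for `k ≥ -2`; by
convention `∂^k = 0` for `k ≤ -2`), as an operator on the ambient Hilbert space, built
from the partial shifts `α i`. -/
noncomputable def coboundaryZ {H : Type*} [NormedAddCommGroup H] [InnerProductSpace ℂ H]
    (α : ℕ → H →ₗᵢ[ℂ] H) (k : ℤ) (x : H) : H :=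
  ∑ i ∈ Finset.range (k + 2).toNat, ((-1 : ℂ) ^ (k + 1 - (i : ℤ))) • α i x

private lemma neg_one_zpow_succ' (a : ℤ) : (-1 : ℂ) ^ (a + 1) = -(-1 : ℂ) ^ a := by
  rw [zpow_add₀ (by norm_num : (-1 : ℂ) ≠ 0), zpow_one]
  ring

/-- For `x ∈ H^{k-1}`, `∂^k x = x - ∂^{k-1} x`. -/
private lemma coboundaryZ_eq_sub {H : Type*} [NormedAddCommGroup H] [InnerProductSpace ℂ H]
    (α : ℕ → H →ₗᵢ[ℂ] H) (k : ℤ) (hk : -1 ≤ k) (x : H)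
    (hx : ∀ i : ℕ, k - 1 < (i : ℤ) → α i x = x) :
    coboundaryZ α k x = x - coboundaryZ α (k - 1) x := by
  set n := (k + 1).toNat with hn
  have hncast : (n : ℤ) = k + 1 := by omega
  have h1 : (k + 2).toNat = n + 1 := by omega
  have h2 : (k - 1 + 2).toNat = n := by omega
  unfold coboundaryZ
  rw [h1, h2, Finset.sum_range_succ]
  have htop : α n x = x := hx n (by omega)
  have hsign0 : (-1 : ℂ) ^ (k + 1 - (n : ℤ)) = 1 := by
    rw [hncast]; norm_num
  rw [htop, hsign0, one_smul]
  have hterm : ∀ i ∈ Finset.range n,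
      ((-1 : ℂ) ^ (k + 1 - (i : ℤ))) • α i x
        = -(((-1 : ℂ) ^ (k - 1 + 1 - (i : ℤ))) • α i x) := by
    intro i _
    have e : k + 1 - (i : ℤ) = (k - 1 + 1 - (i : ℤ)) + 1 := by ring
    rw [e, neg_one_zpow_succ', neg_smul]
  rw [Finset.sum_congr rfl hterm, Finset.sum_neg_distrib]
  abel

/-- The cochain property: `∂^k ∘ ∂^{k-1} = 0`. -/
private lemma coboundaryZ_coboundaryZ {H : Type*} [NormedAddCommGroup H]
    [InnerProductSpace ℂ H] (α : ℕ → H →ₗᵢ[ℂ] H)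
    (hps : ∀ i j : ℕ, i < j → ∀ x : H, α j (α i x) = α i (α (j - 1) x))
    (k : ℤ) (hk : -1 ≤ k) (y : H) :
    coboundaryZ α k (coboundaryZ α (k - 1) y) = 0 := by
  set n := (k + 1).toNat with hn
  have hncast : (n : ℤ) = k + 1 := by omega
  have h1 : (k + 2).toNat = n + 1 := by omega
  have h2 : (k - 1 + 2).toNat = n := by omega
  unfold coboundaryZ
  rw [h1, h2]
  -- expand to a double sum
  have expand : ∀ j : ℕ,
      ((-1 : ℂ) ^ (k + 1 - (j : ℤ))) • α j (∑ m ∈ Finset.range n,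
          ((-1 : ℂ) ^ (k - 1 + 1 - (m : ℤ))) • α m y)
        = ∑ m ∈ Finset.range n,
          ((-1 : ℂ) ^ (k + 1 - (j : ℤ)) * (-1 : ℂ) ^ (k - (m : ℤ))) • α j (α m y) := by
    intro j
    rw [map_sum, Finset.smul_sum]
    refine Finset.sum_congr rfl fun m _ => ?_
    rw [map_smul, smul_smul]
    congr 2
    ring_nf
  rw [Finset.sum_congr rfl fun j _ => expand j, ← Finset.sum_product']
  set F : ℕ × ℕ → H := fun p =>
    ((-1 : ℂ) ^ (k + 1 - (p.1 : ℤ)) * (-1 : ℂ) ^ (k - (p.2 : ℤ))) • α p.1 (α p.2 y) with hF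
  have hsplit := Finset.sum_filter_add_sum_filter_not
    (Finset.range (n + 1) ×ˢ Finset.range n) (fun p => p.1 ≤ p.2) F
  rw [← hsplit]
  set S : Finset (ℕ × ℕ) := (Finset.range n ×ˢ Finset.range n).filter (fun p => p.1 ≤ p.2)
    with hS
  have e1 : (Finset.range (n + 1) ×ˢ Finset.range n).filter (fun p => p.1 ≤ p.2) = S := by
    ext p
    simp only [hS, Finset.mem_filter, Finset.mem_product, Finset.mem_range]
    omega
  have e2 : ∑ p ∈ (Finset.range (n + 1) ×ˢ Finset.range n).filter
      (fun p => ¬ p.1 ≤ p.2), F p = ∑ q ∈ S, -F q := by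
    refine Finset.sum_nbij' (fun p => (p.2, p.1 - 1)) (fun q => (q.2 + 1, q.1)) ?_ ?_ ?_ ?_ ?_
    · intro p hp
      simp only [Finset.mem_filter, Finset.mem_product, Finset.mem_range] at hp ⊢
      simp only [hS, Finset.mem_filter, Finset.mem_product, Finset.mem_range]
      omega
    · intro q hq
      simp only [hS, Finset.mem_filter, Finset.mem_product, Finset.mem_range] at hq
      simp only [Finset.mem_filter, Finset.mem_product, Finset.mem_range]
      omega
    · intro p hp
      simp only [Finset.mem_filter, Finset.mem_product, Finset.mem_range] at hp
      ext <;> simp <;> omega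
    · intro q hq
      ext <;> simp
    · intro p hp
      simp only [Finset.mem_filter, Finset.mem_product, Finset.mem_range] at hp
      obtain ⟨⟨hj, hm⟩, hlt⟩ := hp
      push_neg at hlt
      obtain ⟨j, m⟩ := p
      simp only at hlt hj hm ⊢
      have hcomm : α j (α m y) = α m (α (j - 1) y) := hps m j hlt y
      have hcast : ((j - 1 : ℕ) : ℤ) = (j : ℤ) - 1 := by omega
      simp only [hF, hcomm, hcast]
      have hsign : (-1 : ℂ) ^ (k + 1 - (j : ℤ)) * (-1 : ℂ) ^ (k - (m : ℤ))
          = -((-1 : ℂ) ^ (k + 1 - (m : ℤ)) * (-1 : ℂ) ^ (k - ((j : ℤ) - 1))) := by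
        rw [← zpow_add₀ (by norm_num : (-1 : ℂ) ≠ 0),
            ← zpow_add₀ (by norm_num : (-1 : ℂ) ≠ 0)]
        have e : k + 1 - (m : ℤ) + (k - ((j : ℤ) - 1))
            = (k + 1 - (j : ℤ) + (k - (m : ℤ))) + 1 := by ring
        rw [e, neg_one_zpow_succ']
        ring
      rw [hsign, neg_smul]
  rw [e1, e2, Finset.sum_neg_distrib]
  exact add_neg_cancel _

/-- For an SCH (modelled via its partial shifts, with `x ∈ H^ℓ` expressed as
`α i x = x` for all `i > ℓ`): an element `x ∈ H^k` which already lies in `H^{k-1}` is a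
`k`-cocycle if and only if it is a `k`-coboundary, i.e.
`H_c^k ∩ H^{k-1} = H_b^k ∩ H^{k-1}`. -/
theorem cocycle_iff_coboundary_on_lower_level
    {H : Type*} [NormedAddCommGroup H] [InnerProductSpace ℂ H] [CompleteSpace H]
    (α : ℕ → H →ₗᵢ[ℂ] H)
    (hps : ∀ i j : ℕ, i < j → ∀ x : H, α j (α i x) = α i (α (j - 1) x))
    (k : ℤ) (hk : -1 ≤ k) (x : H) (hx : ∀ i : ℕ, k - 1 < (i : ℤ) → α i x = x) :
    coboundaryZ α k x = 0 ↔
      ∃ y : H, (∀ i : ℕ, k - 1 < (i : ℤ) → α i y = y) ∧ x = coboundaryZ α (k - 1) y := by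
  constructor
  · intro h
    have h2 := coboundaryZ_eq_sub α k hk x hx
    rw [h] at h2
    exact ⟨x, hx, (sub_eq_zero.mp h2.symm)⟩
  · rintro ⟨y, -, rfl⟩
    exact coboundaryZ_coboundaryZ α hps k hk y
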